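/- In an interchange near ring (G, +, •), the operation • is associative if and only if for all x ∈ G: (x • 0) • 0 = x • 0, (0 • x) • 0 = 0 • (x • 0), and 0 • (0 • x) = 0 • x. -/

import Mathlib

theorem stmt_4 {G : Type*} [AddGroup G] (m : G → G → G)
    (hint : ∀ w x y z : G, m (w + x) (y + z) = m w y + m x z) :
    (∀ x y z : G, m (m x y) z = m x (m y z)) ↔
      (∀ x : G, m (m x 0) 0 = m x 0 ∧ m (m 0 x) 0 = m 0 (m x 0) ∧ m 0 (m 0 x) = m 0 x) := by
  have h00 : m 0 0 = 0 := by
    have := hint 0 0 0 0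
    simp only [add_zero] at this
    exact left_eq_add.mp this
  have hsplit : ∀ x y : G, m x y = m x 0 + m 0 y := by
    intro x y
    have := hint x 0 0 y
    simpa using this
  have hfadd : ∀ x y : G, m (x + y) 0 = m x 0 + m y 0 := by
    intro x y
    have := hint x y 0 0
    simpa using this
  have hgadd : ∀ x y : G, m 0 (x + y) = m 0 x + m 0 y := by
    intro x y
    have := hint 0 0 x y
    simpa using this
  constructor
  · intro hassoc x
    refine ⟨?_, hassoc 0 x 0, ?_⟩
    · rw [hassoc, h00]
    · rw [← hassoc, h00]
  · intro h x y z
    have h1 := fun t => (h t).1; have h2 := fun t => (h t).2.1; have h3 := fun t => (h t).2.2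
    calc m (m x y) z = m (m x 0 + m 0 y) (0 + z) := by rw [← hsplit, zero_add]
      _ = m (m x 0) 0 + m (m 0 y) z := hint _ _ _ _
      _ = m x 0 + (m (m 0 y) 0 + m 0 z) := by rw [h1, hsplit (m 0 y) z]
      _ = m x 0 + (m 0 (m y 0) + m 0 (m 0 z)) := by rw [h2, h3]
      _ = m x 0 + m 0 (m y 0 + m 0 z) := by rw [hgadd]
      _ = m x (m y z) := by rw [← hsplit y z, ← hsplit]
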